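/- Let p and s be natural numbers with 0 < s < p, let A : Matrix (Fin p) (Fin s) ℝ have rank s, let M be a symmetric positive definite p×p real matrix and let N be a symmetric positive semidefinite p×p real matrix. Then the function g : ℝ → ℝ defined by g(t) = -log(det(Aᵀ * ((1-t) • M + t • N)⁻¹ * A)) is differentiable at t = 0 with derivative g'(0) = trace(M⁻¹ * A * (Aᵀ * M⁻¹ * A)⁻¹ * Aᵀ * M⁻¹ * N) - s. -/

import Mathlib

open Matrix

attribute [local instance] Matrix.linftyOpNormedAddCommGroup Matrix.linftyOpNormedSpace
  Matrix.linftyOpNormedRing Matrix.linftyOpNormedAlgebra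

namespace DAaux

/-- Evaluation of a matrix entry, as a continuous linear map. -/
noncomputable def entryCLM (n m : Type*) [Fintype n] [Fintype m] (i : n) (j : m) :
    Matrix n m ℝ →L[ℝ] ℝ :=
  LinearMap.toContinuousLinearMap
    { toFun := fun X => X i j
      map_add' := fun _ _ => rfl
      map_smul' := fun _ _ => rfl }

lemma entry_hasDerivAt {n m : Type*} [Fintype n] [Fintype m]
    {f : ℝ → Matrix n m ℝ} {f' : Matrix n m ℝ} {t : ℝ}
    (hf : HasDerivAt f f' t) (i : n) (j : m) :
    HasDerivAt (fun x => f x i j) (f' i j) t := by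
  have h := (entryCLM n m i j).hasFDerivAt.comp_hasDerivAt t hf
  exact h

/-- Conjugation `X ↦ Aᵀ X A`, as a continuous linear map. -/
noncomputable def conjCLM {p s : ℕ} (A : Matrix (Fin p) (Fin s) ℝ) :
    Matrix (Fin p) (Fin p) ℝ →L[ℝ] Matrix (Fin s) (Fin s) ℝ :=
  LinearMap.toContinuousLinearMap
    { toFun := fun X => Aᵀ * X * A
      map_add' := fun X Y => by
        rw [Matrix.mul_add, Matrix.add_mul]
      map_smul' := fun c X => by
        simp only [RingHom.id_apply]
        rw [Matrix.mul_smul, Matrix.smul_mul] }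

/-- Jacobi's formula, one-dimensional form: the derivative of `t ↦ det (h t)` is
`trace (adjugate (h t₀) * H')` where `H'` is the entrywise derivative of `h`. -/
lemma hasDerivAt_det {n : ℕ} {h : ℝ → Matrix (Fin n) (Fin n) ℝ}
    {H' : Matrix (Fin n) (Fin n) ℝ} {t₀ : ℝ}
    (hh : ∀ i j, HasDerivAt (fun t => h t i j) (H' i j) t₀) :
    HasDerivAt (fun t => (h t).det) ((adjugate (h t₀) * H').trace) t₀ := by
  classical
  set B := h t₀ with hB
  have main : HasDerivAt (fun t => (h t).det)
      (∑ σ : Equiv.Perm (Fin n), ((Equiv.Perm.sign σ : ℤ) : ℝ) *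
        (∑ i, (∏ j ∈ Finset.univ.erase i, B (σ j) j) • H' (σ i) i)) t₀ := by
    have hfun : (fun t => (h t).det)
        = fun t => ∑ σ : Equiv.Perm (Fin n),
            ((Equiv.Perm.sign σ : ℤ) : ℝ) * ∏ i, h t (σ i) i := by
      funext t; exact det_apply' (h t)
    rw [hfun]
    exact HasDerivAt.fun_sum fun (σ : Equiv.Perm (Fin n)) _ =>
      (HasDerivAt.fun_finsetProd (fun i _ => hh (σ i) i)).const_mul _
  convert main using 1
  -- now the algebraic identity: trace (adjugate B * H') equals the big sum
  have key : ∀ i : Fin n,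
      (∑ σ : Equiv.Perm (Fin n), ((Equiv.Perm.sign σ : ℤ) : ℝ) *
        ((∏ j ∈ Finset.univ.erase i, B (σ j) j) * H' (σ i) i))
      = (B.updateCol i (fun k => H' k i)).det := by
    intro i
    rw [det_apply']
    refine Finset.sum_congr rfl fun σ _ => ?_
    congr 1
    rw [← Finset.mul_prod_erase _ _ (Finset.mem_univ i)]
    rw [mul_comm]
    congr 1
    · simp [Matrix.updateCol_apply]
    · refine Finset.prod_congr rfl fun j hj => ?_
      have hji : j ≠ i := Finset.ne_of_mem_erase hj
      simp [Matrix.updateCol_apply, hji]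
  have hdetcol : ∀ i : Fin n,
      (B.updateCol i (fun k => H' k i)).det = ∑ k, adjugate B i k * H' k i := by
    intro i
    rw [← cramer_apply, cramer_eq_adjugate_mulVec]
    simp [Matrix.mulVec, dotProduct]
  calc (adjugate B * H').trace
      = ∑ i, ∑ k, adjugate B i k * H' k i := by
        simp [Matrix.trace, Matrix.diag, Matrix.mul_apply]
    _ = ∑ i, (B.updateCol i (fun k => H' k i)).det := by
        simp_rw [hdetcol]
    _ = ∑ i, ∑ σ : Equiv.Perm (Fin n), ((Equiv.Perm.sign σ : ℤ) : ℝ) *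
          ((∏ j ∈ Finset.univ.erase i, B (σ j) j) * H' (σ i) i) := by
        simp_rw [key]
    _ = ∑ σ : Equiv.Perm (Fin n), ((Equiv.Perm.sign σ : ℤ) : ℝ) *
          (∑ i, (∏ j ∈ Finset.univ.erase i, B (σ j) j) • H' (σ i) i) := by
        rw [Finset.sum_comm]
        refine Finset.sum_congr rfl fun σ _ => ?_
        rw [Finset.mul_sum]
        simp [smul_eq_mul]

end DAaux

open DAaux

/-- Directional derivative of the `D_A`-criterion along the segment from `M`
toward `N`: the derivative at `t = 0` of `t ↦ -log det(Aᵀ ((1-t)M + tN)⁻¹ A)`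
is `trace(M⁻¹ A (Aᵀ M⁻¹ A)⁻¹ Aᵀ M⁻¹ N) - s`. -/
theorem DA_criterion_directional_derivative
    (p s : ℕ) (hs : 0 < s) (hsp : s < p)
    (A : Matrix (Fin p) (Fin s) ℝ) (hA : A.rank = s)
    (M N : Matrix (Fin p) (Fin p) ℝ) (hM : M.PosDef) (hN : N.PosSemidef)
    (g : ℝ → ℝ)
    (hg : ∀ t, g t = -Real.log (Aᵀ * ((1 - t) • M + t • N)⁻¹ * A).det) :
    HasDerivAt g
      ((M⁻¹ * A * (Aᵀ * M⁻¹ * A)⁻¹ * Aᵀ * M⁻¹ * N).trace - (s : ℝ)) 0 := by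
  classical
  have hMdet : IsUnit M.det := isUnit_iff_ne_zero.mpr (ne_of_gt hM.det_pos)
  have hMu : IsUnit M := (Matrix.isUnit_iff_isUnit_det M).mpr hMdet
  have hMinv : (M⁻¹).PosDef := hM.inv
  -- A has full column rank, so mulVec by A is injective
  have hinj : ∀ x : Fin s → ℝ, x ≠ 0 → A *ᵥ x ≠ 0 := by
    have hker : LinearMap.ker A.mulVecLin = ⊥ := by
      have h1 := LinearMap.finrank_range_add_finrank_ker A.mulVecLin
      rw [Module.finrank_fin_fun] at h1
      have h2 : A.rank + Module.finrank ℝ (LinearMap.ker A.mulVecLin) = s := h1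
      rw [hA] at h2
      have h3 : Module.finrank ℝ (LinearMap.ker A.mulVecLin) = 0 := by omega
      exact Submodule.finrank_eq_zero.mp h3
    intro x hx hAx
    exact hx (by simpa [hker] using (LinearMap.mem_ker.mpr (by simpa using hAx) :
      x ∈ LinearMap.ker A.mulVecLin))
  -- B := Aᵀ M⁻¹ A is positive definite
  set B : Matrix (Fin s) (Fin s) ℝ := Aᵀ * M⁻¹ * A with hBdef
  have hB : B.PosDef := by
    refine Matrix.PosDef.of_dotProduct_mulVec_pos ?_ ?_
    · have := (hMinv.posSemidef.conjTranspose_mul_mul_same A).1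
      simpa [hBdef] using this
    · intro x hx
      have h0 := hMinv.dotProduct_mulVec_pos (hinj x hx)
      have heq : star x ⬝ᵥ (B *ᵥ x) = star (A *ᵥ x) ⬝ᵥ (M⁻¹ *ᵥ (A *ᵥ x)) := by
        rw [hBdef, star_trivial, star_trivial, ← Matrix.mulVec_mulVec, ← Matrix.mulVec_mulVec,
          Matrix.dotProduct_mulVec, Matrix.vecMul_transpose]
      rw [heq]
      exact h0
  have hBdet : IsUnit B.det := isUnit_iff_ne_zero.mpr (ne_of_gt hB.det_pos)
  have hBu : IsUnit B := (Matrix.isUnit_iff_isUnit_det B).mpr hBdet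
  -- the path F
  set F : ℝ → Matrix (Fin p) (Fin p) ℝ := fun t => (1 - t) • M + t • N with hF
  have hF0 : F 0 = M := by simp [hF]
  have hFd : HasDerivAt F (N - M) 0 := by
    have h1 : HasDerivAt (fun t : ℝ => (1 - t) • M) ((-1 : ℝ) • M) 0 :=
      ((hasDerivAt_id (0 : ℝ)).const_sub 1).smul_const M
    have h2 : HasDerivAt (fun t : ℝ => t • N) ((1 : ℝ) • N) 0 :=
      (hasDerivAt_id (0 : ℝ)).smul_const N
    have := h1.add h2
    simp only [neg_smul, one_smul] at this
    exact this.congr_deriv (neg_add_eq_sub M N)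
  -- the inverse path
  have hinvF : HasDerivAt (fun t => Ring.inverse (F t)) (-(M⁻¹ * (N - M) * M⁻¹)) 0 := by
    have hcoe : ((hMu.unit⁻¹ : (Matrix (Fin p) (Fin p) ℝ)ˣ) : Matrix (Fin p) (Fin p) ℝ)
        = M⁻¹ := by
      rw [Matrix.coe_units_inv, hMu.unit_spec]
    have hd : HasFDerivAt (Ring.inverse)
        (-(ContinuousLinearMap.mulLeftRight ℝ (Matrix (Fin p) (Fin p) ℝ) M⁻¹ M⁻¹)) (F 0) := by
      rw [hF0]
      have h0 := hasFDerivAt_ringInverse (𝕜 := ℝ) hMu.unit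
      rw [hcoe, hMu.unit_spec] at h0
      exact h0
    have hcomp := hd.comp_hasDerivAt 0 hFd
    simp only [ContinuousLinearMap.neg_apply, ContinuousLinearMap.mulLeftRight_apply] at hcomp
    exact hcomp
  -- the conjugated path
  set E : Matrix (Fin p) (Fin p) ℝ := -(M⁻¹ * (N - M) * M⁻¹) with hE
  set H' : Matrix (Fin s) (Fin s) ℝ := Aᵀ * E * A with hH'
  have hhd : HasDerivAt (fun t => Aᵀ * Ring.inverse (F t) * A) H' 0 := by
    have h := (conjCLM A).hasFDerivAt.comp_hasDerivAt 0 hinvF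
    exact h
  -- value at 0
  have hval0 : Aᵀ * Ring.inverse (F 0) * A = B := by
    rw [hF0, ← Matrix.nonsing_inv_eq_ringInverse, hBdef]
  -- det derivative
  have hdet : HasDerivAt (fun t => (Aᵀ * Ring.inverse (F t) * A).det)
      ((adjugate B * H').trace) 0 := by
    have h := DAaux.hasDerivAt_det (h := fun t => Aᵀ * Ring.inverse (F t) * A)
      (H' := H') (t₀ := 0) (fun i j => entry_hasDerivAt hhd i j)
    simpa only [hval0] using h
  -- log derivative
  have hdetne : B.det ≠ 0 := ne_of_gt hB.det_pos
  have hlog : HasDerivAt (fun t => Real.log ((Aᵀ * Ring.inverse (F t) * A).det))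
      ((B.det)⁻¹ * (adjugate B * H').trace) 0 := by
    have hl : HasDerivAt Real.log (B.det)⁻¹ ((Aᵀ * Ring.inverse (F 0) * A).det) := by
      rw [hval0]; exact Real.hasDerivAt_log hdetne
    exact hl.comp 0 hdet
  have hneg := hlog.neg
  -- identify g with the function above
  have hgfun : g = fun t => -Real.log ((Aᵀ * Ring.inverse (F t) * A).det) := by
    funext t
    rw [hg t, Matrix.nonsing_inv_eq_ringInverse]
  -- identify the derivative value
  have hBinv : B⁻¹ = (B.det)⁻¹ • adjugate B := by
    rw [Matrix.inv_def, Ring.inverse_eq_inv]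
  have htrace : (B.det)⁻¹ * (adjugate B * H').trace = (B⁻¹ * H').trace := by
    rw [hBinv, Matrix.smul_mul, Matrix.trace_smul, smul_eq_mul]
  have hMinvM : M⁻¹ * M = 1 := Matrix.nonsing_inv_mul M hMdet
  have hBinvB : B⁻¹ * B = 1 := Matrix.nonsing_inv_mul B hBdet
  have hfinal : -((B.det)⁻¹ * (adjugate B * H').trace)
      = (M⁻¹ * A * B⁻¹ * Aᵀ * M⁻¹ * N).trace - (s : ℝ) := by
    rw [htrace]
    have hH'eq : H' = -(Aᵀ * (M⁻¹ * N * M⁻¹) * A - Aᵀ * M⁻¹ * A) := by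
      rw [hH', hE]
      have : M⁻¹ * (N - M) * M⁻¹ = M⁻¹ * N * M⁻¹ - M⁻¹ := by
        rw [Matrix.mul_sub, Matrix.sub_mul]
        congr 1
        rw [Matrix.mul_assoc, Matrix.mul_nonsing_inv M hMdet, Matrix.mul_one]
      rw [this]
      simp [Matrix.mul_sub, Matrix.sub_mul, Matrix.mul_neg, Matrix.neg_mul, Matrix.mul_assoc]
    rw [hH'eq]
    rw [Matrix.mul_neg, Matrix.trace_neg, neg_neg, Matrix.mul_sub, Matrix.trace_sub]
    have h2 : (B⁻¹ * (Aᵀ * M⁻¹ * A)).trace = (s : ℝ) := by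
      rw [← hBdef, hBinvB, Matrix.trace_one]
      simp
    have h1 : (B⁻¹ * (Aᵀ * (M⁻¹ * N * M⁻¹) * A)).trace
        = (M⁻¹ * A * B⁻¹ * Aᵀ * M⁻¹ * N).trace := by
      have := Matrix.trace_mul_comm (B⁻¹ * Aᵀ * M⁻¹ * N) (M⁻¹ * A)
      calc (B⁻¹ * (Aᵀ * (M⁻¹ * N * M⁻¹) * A)).trace
          = ((B⁻¹ * Aᵀ * M⁻¹ * N) * (M⁻¹ * A)).trace := by
            congr 1
            simp only [Matrix.mul_assoc]
        _ = ((M⁻¹ * A) * (B⁻¹ * Aᵀ * M⁻¹ * N)).trace := this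
        _ = (M⁻¹ * A * B⁻¹ * Aᵀ * M⁻¹ * N).trace := by
            congr 1
            simp only [Matrix.mul_assoc]
    rw [h1, h2]
  rw [hgfun, ← hfinal]
  exact hneg
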